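/- Let A be a monomial k-algebra. The Hilbert series of the Yoneda algebra E(A) = Ext_A(k,k) (in the cohomological grading) is a rational function. -/

import Mathlib

/- Combinatorial model of a monomial algebra A = T(V)/I and its CPS graph Γ(A).
   Monomials of the tensor algebra on generators indexed by σ are lists over σ;
   the tensor product w ⊗ m is list concatenation w ++ m. -/

namespace CPS

/-- Monomials of the tensor algebra: words in the generators. -/
abbrev Mon (σ : Type) := List σ

/-- A monomial ideal, given by finitely many monomial generators of degree ≥ 2. -/
structure MonIdeal (σ : Type) where
  gens : Finset (Mon σ)
  deg2 : ∀ r ∈ gens, 2 ≤ r.length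

variable {σ : Type}

/-- Membership in the two-sided monomial ideal generated by `gens`. -/
def MonIdeal.Mem (I : MonIdeal σ) (m : Mon σ) : Prop :=
  ∃ a r b, r ∈ I.gens ∧ m = a ++ r ++ b

/-- 𝔄_m : the set of minimal left annihilating monomials of m
    (w ∉ I, w ⊗ m ∈ I, and no proper suffix of w left-annihilates m). -/
def Ann (I : MonIdeal σ) (m : Mon σ) : Set (Mon σ) :=
  {w | ¬ I.Mem m ∧ ¬ I.Mem w ∧ I.Mem (w ++ m) ∧
    ∀ w' : Mon σ, w' <:+ w → w' ≠ w → ¬ I.Mem (w' ++ m)}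

/-- Directed edges of the CPS graph Γ(A): m₁ → m₂ iff m₂ ∈ 𝔄_{m₁}. -/
def Edge (I : MonIdeal σ) (m₁ m₂ : Mon σ) : Prop := m₂ ∈ Ann I m₁

/-- The vertex sets 𝔊_i : 𝔊_0 = degree-1 generators, 𝔊_{i+1} = ⋃_{w ∈ 𝔊_i} 𝔄_w. -/
def Gs (I : MonIdeal σ) : ℕ → Set (Mon σ)
  | 0 => {m | m.length = 1}
  | (i+1) => ⋃ w ∈ Gs I i, Ann I w

/-- The vertex set 𝔊 = ⋃_i 𝔊_i of the CPS graph. -/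
def Vertices (I : MonIdeal σ) : Set (Mon σ) := ⋃ i, Gs I i

/-- A walk of length n in Γ(A), encoded by a function giving the vertices
    p 0, p 1, ..., p n (values beyond n are irrelevant). -/
def IsWalk (I : MonIdeal σ) (n : ℕ) (p : ℕ → Mon σ) : Prop :=
  p 0 ∈ Vertices I ∧ ∀ i < n, Edge I (p i) (p (i+1))

/-- An infinite walk in Γ(A). -/
def InfWalk (I : MonIdeal σ) (p : ℕ → Mon σ) : Prop :=
  p 0 ∈ Vertices I ∧ ∀ i, Edge I (p i) (p (i+1))

/-- The reversed tensor product p_n ⊗ p_{n-1} ⊗ ⋯ ⊗ p_0 of the vertices of a walk. -/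
def tens (n : ℕ) (p : ℕ → Mon σ) : Mon σ :=
  (((List.range (n+1)).map p).reverse).flatten

/-- Equivalence of walks of the same length n: equal reversed tensor products. -/
def WEquiv (n : ℕ) (p q : ℕ → Mon σ) : Prop := tens n p = tens n q

/-- A walk is anchored if its first vertex lies in 𝔊_0 (is a degree-1 generator). -/
def Anchored (p : ℕ → Mon σ) : Prop := (p 0).length = 1

/-- A walk is admissible if it is a walk equivalent to an anchored walk. -/
def Admissible (I : MonIdeal σ) (n : ℕ) (p : ℕ → Mon σ) : Prop :=
  IsWalk I n p ∧ ∃ q, IsWalk I n q ∧ Anchored q ∧ WEquiv n p q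

/-- The walk obtained by deleting the first i vertices. -/
def shift (p : ℕ → Mon σ) (i : ℕ) : ℕ → Mon σ := fun t => p (i + t)

end CPS


namespace CPS

variable {σ : Type}

lemma Ann.ne_nil {I : MonIdeal σ} {m w : Mon σ} (h : w ∈ Ann I m) : w ≠ [] := by
  rintro rfl
  exact h.1 (by simpa using h.2.2.1)

lemma Ann.exists_rel {I : MonIdeal σ} {m w : Mon σ} (h : w ∈ Ann I m) :
    ∃ r ∈ I.gens, w.length < r.length := by
  obtain ⟨hm, hw, ⟨a, r, b, hr, heq⟩, hmin⟩ := h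
  rw [List.append_assoc] at heq
  -- heq : w ++ m = a ++ (r ++ b)
  have ha : a.length < w.length := by
    by_contra hle
    push_neg at hle
    apply hm
    have h1 : (w ++ m).take w.length = w := List.take_left
    have h2 : (a ++ (r ++ b)).take w.length = a.take w.length :=
      List.take_append_of_le_length hle
    have hw2 : a = w ++ a.drop w.length := by
      conv_lhs => rw [← List.take_append_drop w.length a]
      rw [← h2, heq.symm, h1]
    rw [hw2, List.append_assoc] at heq
    have := List.append_cancel_left heq
    exact ⟨a.drop w.length, r, b, hr, by rw [this, List.append_assoc]⟩
  -- a is a prefix of w; minimality forces a = []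
  have hale : a.length ≤ w.length := le_of_lt ha
  have h1 : (w ++ m).take a.length = w.take a.length := List.take_append_of_le_length hale
  have h2 : (a ++ (r ++ b)).take a.length = a := by
    rw [List.take_append_of_le_length le_rfl, List.take_length]
  have hwsplit : w = a ++ w.drop a.length := by
    conv_lhs => rw [← List.take_append_drop a.length w]
    rw [← h1, heq, h2]
  have hkey : w.drop a.length ++ m = r ++ b := by
    apply List.append_cancel_left (as := a)
    rw [← List.append_assoc, ← hwsplit, heq]
  have hdw : w.drop a.length = w := by
    by_contra hne
    exact hmin _ (List.drop_suffix _ _) hne ⟨[], r, b, hr, by simp [hkey]⟩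
  have ha0 : a = [] := by
    have := congrArg List.length hdw
    rw [List.length_drop] at this
    have hlen0 : a.length = 0 := by omega
    exact List.eq_nil_of_length_eq_zero hlen0
  rw [ha0] at hkey
  simp only [List.length_nil, List.drop_zero] at hkey
  have hwm : w ++ m = r ++ b := hkey
  refine ⟨r, hr, ?_⟩
  by_contra hrl
  push_neg at hrl
  apply hw
  have h3 : (w ++ m).take r.length = w.take r.length := List.take_append_of_le_length hrl
  have h4 : (r ++ b).take r.length = r := by
    rw [List.take_append_of_le_length le_rfl, List.take_length]
  have : w = r ++ w.drop r.length := by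
    conv_lhs => rw [← List.take_append_drop r.length w]
    rw [← h3, hwm, h4]
  exact ⟨[], r, w.drop r.length, hr, by simpa using this⟩

open scoped Classical in
/-- Bound on lengths of vertices. -/
noncomputable def bnd (I : MonIdeal σ) : ℕ := max 1 (I.gens.sup List.length)

/-- A finite superset of the vertex set. -/
def Sset (I : MonIdeal σ) : Set (Mon σ) := {w | 1 ≤ w.length ∧ w.length ≤ bnd I}

lemma Ann.mem_Sset {I : MonIdeal σ} {m w : Mon σ} (h : w ∈ Ann I m) : w ∈ Sset I := by
  obtain ⟨r, hr, hlt⟩ := Ann.exists_rel h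
  constructor
  · have hne := Ann.ne_nil h
    cases w with
    | nil => exact absurd rfl hne
    | cons a l => simp [List.length_cons]
  · exact le_trans (le_of_lt hlt) (le_trans (Finset.le_sup hr) (le_max_right _ _))

lemma len_one_mem_Sset {I : MonIdeal σ} {w : Mon σ} (h : w.length = 1) : w ∈ Sset I :=
  ⟨le_of_eq h.symm, h ▸ le_max_left _ _⟩

lemma Sset_finite [Finite σ] (I : MonIdeal σ) : (Sset I).Finite :=
  (List.finite_length_le σ (bnd I)).subset (fun _ hw => hw.2)

section Count

variable [Finite σ] (I : MonIdeal σ)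

open scoped Classical

set_option linter.unusedSectionVars false

/-- The finite vertex (super)set as a type. -/
abbrev V : Type := ↥(Sset I)

noncomputable instance : Fintype (V I) := (Sset_finite I).fintype

open scoped Classical in
/-- The transfer (adjacency) matrix of the CPS graph. -/
noncomputable def TM : Matrix (V I) (V I) ℤ :=
  fun v w => if Edge I v.1 w.1 then 1 else 0

open scoped Classical in
/-- Indicator of degree-1 vertices. -/
noncomputable def uvec : V I → ℤ := fun v => if (v.1).length = 1 then 1 else 0

/-- Anchored walks as functions on `Fin (n+1)`, with values in the finite vertex set. -/
abbrev FW (n : ℕ) : Type :=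
  {p : Fin (n+1) → V I // ((p 0).1.length = 1 ∧
      ∀ i : Fin n, Edge I (p i.castSucc).1 (p i.succ).1)}

/-- Anchored walks ending at `w`. -/
abbrev FWE (n : ℕ) (w : V I) : Type :=
  {p : FW I n // p.1 (Fin.last n) = w}

lemma nat_card_sigma {ι : Type} [Fintype ι] (f : ι → Type) [∀ i, Finite (f i)] :
    Nat.card (Sigma f) = ∑ i, Nat.card (f i) := by
  classical
  haveI : ∀ i, Fintype (f i) := fun i => Fintype.ofFinite _
  simp [Nat.card_eq_fintype_card, Fintype.card_sigma]

lemma card_FWE_zero (w : V I) :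
    Nat.card (FWE I 0 w) = if (w.1).length = 1 then 1 else 0 := by
  classical
  split_ifs with h
  · haveI : Nonempty (FWE I 0 w) :=
      ⟨⟨⟨fun _ => w, h, fun i => i.elim0⟩, rfl⟩⟩
    haveI : Subsingleton (FWE I 0 w) := by
      constructor
      rintro ⟨⟨p, hp⟩, hpl⟩ ⟨⟨q, hq⟩, hql⟩
      have hp0 : ∀ i : Fin 1, p i = w := fun i => by
        have : i = Fin.last 0 := Subsingleton.elim _ _
        rw [this]; exact hpl
      have hq0 : ∀ i : Fin 1, q i = w := fun i => by
        have : i = Fin.last 0 := Subsingleton.elim _ _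
        rw [this]; exact hql
      apply Subtype.ext; apply Subtype.ext; funext i
      show p i = q i
      rw [hp0 i, hq0 i]
    exact Nat.card_unique
  · haveI : IsEmpty (FWE I 0 w) := by
      constructor
      rintro ⟨⟨p, hp1, _⟩, hpl⟩
      apply h
      have : p 0 = w := by
        have h0 : (0 : Fin 1) = Fin.last 0 := Subsingleton.elim _ _
        rw [h0]; exact hpl
      rw [← this]; exact hp1
    exact Nat.card_of_isEmpty

end Count

section Count2

variable [Finite σ] (I : MonIdeal σ)

open scoped Classical

set_option linter.unusedSectionVars false

set_option linter.unusedSectionVars false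

/-- Splitting off the last step of a walk. -/
noncomputable def fweSuccEquiv (n : ℕ) (w v : V I) :
    {p : FWE I (n+1) w // p.1.1 ((Fin.last n).castSucc) = v} ≃
      (FWE I n v × PLift (Edge I v.1 w.1)) where
  toFun x :=
    ⟨⟨⟨fun i => x.1.1.1 i.castSucc,
        by
          refine ⟨by simpa using x.1.1.2.1, fun i => ?_⟩
          exact x.1.1.2.2 i.castSucc⟩,
      x.2⟩,
     PLift.up (by
        have he := x.1.1.2.2 (Fin.last n)
        rw [Fin.succ_last] at he
        rw [x.2, x.1.2] at he
        exact he)⟩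
  invFun q :=
    ⟨⟨⟨Fin.snoc q.1.1.1 w,
        by
          constructor
          · have h0 : ((0 : Fin (n+1)).castSucc) = (0 : Fin (n+2)) := Fin.castSucc_zero
            rw [← h0, Fin.snoc_castSucc]
            exact q.1.1.2.1
          · intro i
            refine Fin.lastCases ?_ ?_ i
            · rw [Fin.succ_last, Fin.snoc_last, Fin.snoc_castSucc, q.1.2]
              exact q.2.down
            · intro j
              rw [Fin.succ_castSucc, Fin.snoc_castSucc, Fin.snoc_castSucc]
              exact q.1.1.2.2 j⟩,
       Fin.snoc_last (α := fun _ => V I) w q.1.1.1⟩,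
     (Fin.snoc_castSucc (α := fun _ => V I) w q.1.1.1 (Fin.last n)).trans q.1.2⟩
  left_inv x := by
    obtain ⟨⟨⟨p, hp⟩, hl⟩, hv⟩ := x
    apply Subtype.ext; apply Subtype.ext; apply Subtype.ext
    show Fin.snoc (α := fun _ : Fin (n+2) => V I) (fun i => p i.castSucc) w = p
    funext i
    refine Fin.lastCases ?_ ?_ i
    · rw [Fin.snoc_last]
      exact hl.symm
    · intro j; rw [Fin.snoc_castSucc]
  right_inv q := by
    obtain ⟨⟨⟨p, hp⟩, hl⟩, e⟩ := q
    refine Prod.ext ?_ (Subsingleton.elim _ _)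
    apply Subtype.ext; apply Subtype.ext
    show (fun i : Fin (n+1) => Fin.snoc (α := fun _ : Fin (n+2) => V I) p w i.castSucc) = p
    funext i
    rw [Fin.snoc_castSucc]

end Count2

section Count3

variable [Finite σ] (I : MonIdeal σ)

open scoped Classical

set_option linter.unusedSectionVars false

set_option linter.unusedSectionVars false

lemma nat_card_plift_prop (P : Prop) [Decidable P] :
    Nat.card (PLift P) = if P then 1 else 0 := by
  split_ifs with h
  · exact @Nat.card_unique _ ⟨⟨h⟩⟩ _
  · exact @Nat.card_of_isEmpty _ ⟨fun x => h x.down⟩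

lemma card_FWE_succ (n : ℕ) (w : V I) :
    Nat.card (FWE I (n+1) w) =
      ∑ v : V I, Nat.card (FWE I n v) * (if Edge I v.1 w.1 then 1 else 0) := by
  classical
  rw [← Nat.card_congr (Equiv.sigmaFiberEquiv
    (fun p : FWE I (n+1) w => p.1.1 ((Fin.last n).castSucc)))]
  rw [nat_card_sigma]
  refine Finset.sum_congr rfl fun v _ => ?_
  rw [Nat.card_congr (fweSuccEquiv I n w v), Nat.card_prod, nat_card_plift_prop]

lemma card_FWE (n : ℕ) (w : V I) :
    (Nat.card (FWE I n w) : ℤ) = Matrix.vecMul (uvec I) ((TM I)^n) w := by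
  classical
  induction n generalizing w with
  | zero =>
      rw [pow_zero, Matrix.vecMul_one, card_FWE_zero, uvec]
      split_ifs <;> simp
  | succ n ih =>
      rw [pow_succ, ← Matrix.vecMul_vecMul, card_FWE_succ]
      rw [Matrix.vecMul, dotProduct]
      push_cast
      refine Finset.sum_congr rfl fun v _ => ?_
      rw [ih v]
      rfl

lemma card_FW (n : ℕ) :
    (Nat.card (FW I n) : ℤ) = ∑ w : V I, Matrix.vecMul (uvec I) ((TM I)^n) w := by
  classical
  rw [← Nat.card_congr (Equiv.sigmaFiberEquiv (fun p : FW I n => p.1 (Fin.last n)))]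
  rw [nat_card_sigma]
  push_cast
  exact Finset.sum_congr rfl fun w _ => card_FWE I n w

lemma walk_mem_Sset {n : ℕ} {p : ℕ → Mon σ} (hw : IsWalk I n p) (ha : Anchored p) :
    ∀ i ≤ n, p i ∈ Sset I := by
  intro i hi
  cases i with
  | zero => exact len_one_mem_Sset ha
  | succ j => exact Ann.mem_Sset (hw.2 j (by omega))

end Count3
end CPS
namespace CPS
/-- Anchored walks of length n in Γ(A), recorded as lists of their vertices. -/
def AWalks {σ : Type} (I : MonIdeal σ) (n : ℕ) : Set (List (Mon σ)) :=
  {l | ∃ p : ℕ → Mon σ, IsWalk I n p ∧ Anchored p ∧ l = (List.range (n+1)).map p}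

/-- The number of anchored walks of length n, i.e. dim Ext_A^{n+1}(k,k). -/
noncomputable def growth {σ : Type} (I : MonIdeal σ) (n : ℕ) : ℕ :=
  Set.ncard (AWalks I n)

section Count4

variable [Finite σ] (I : MonIdeal σ)

open scoped Classical

set_option linter.unusedSectionVars false

lemma toWalk_mem (n : ℕ) (p : FW I n) :
    (List.range (n+1)).map (fun i => if h : i < n+1 then (p.1 ⟨i, h⟩).1 else []) ∈
      AWalks I n := by
  refine ⟨_, ⟨?_, ?_⟩, ?_, rfl⟩
  · rw [dif_pos (Nat.succ_pos n)]
    exact Set.mem_iUnion.2 ⟨0, p.2.1⟩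
  · intro i hi
    rw [dif_pos (by omega : i < n+1), dif_pos (by omega : i+1 < n+1)]
    exact p.2.2 ⟨i, hi⟩
  · rw [Anchored, dif_pos (Nat.succ_pos n)]
    exact p.2.1

lemma growth_eq (n : ℕ) :
    (growth I n : ℤ) = ∑ w : V I, Matrix.vecMul (uvec I) ((TM I)^n) w := by
  rw [← card_FW I n]
  congr 1
  rw [growth, ← Nat.card_coe_set_eq]
  refine (Nat.card_eq_of_bijective
    (fun p : FW I n => (⟨_, toWalk_mem I n p⟩ : ↥(AWalks I n))) ⟨?_, ?_⟩).symm
  · intro p q hpq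
    have hl := congrArg Subtype.val hpq
    apply Subtype.ext; funext i
    have h2 := congrArg (fun l : List (Mon σ) => l[i.1]?) hl
    simp only [List.getElem?_map, List.getElem?_range, i.2, if_pos, dif_pos,
      Option.map_some, Option.some.injEq, Fin.eta] at h2
    exact Subtype.ext h2
  · rintro ⟨l, q, hwalk, hanch, rfl⟩
    have hmem : ∀ i : Fin (n+1), q i.1 ∈ Sset I :=
      fun i => walk_mem_Sset I hwalk hanch i.1 (by omega)
    refine ⟨⟨fun i => ⟨q i.1, hmem i⟩, hanch, fun i => hwalk.2 i.1 i.2⟩, ?_⟩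
    apply Subtype.ext
    refine List.map_congr_left fun i hi => ?_
    rw [List.mem_range] at hi
    rw [dif_pos hi]

end Count4

section Series

variable [Finite σ] (I : MonIdeal σ)

open scoped Classical

set_option linter.unusedSectionVars false

/-- Generating matrix of walk counts. -/
noncomputable def Sigmat : Matrix (V I) (V I) (PowerSeries ℤ) :=
  fun v w => PowerSeries.mk fun n => ((TM I)^n) v w

/-- The characteristic matrix 1 - t·M over polynomials. -/
noncomputable def Npoly : Matrix (V I) (V I) (Polynomial ℤ) :=
  1 - (Polynomial.X : Polynomial ℤ) • (TM I).map Polynomial.C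

lemma N_mul_Sigma :
    ((1 : Matrix (V I) (V I) (PowerSeries ℤ)) -
      (PowerSeries.X : PowerSeries ℤ) • (TM I).map (PowerSeries.C (R := ℤ))) * Sigmat I = 1 := by
  have key : ((PowerSeries.X : PowerSeries ℤ) • (TM I).map (PowerSeries.C (R := ℤ))) * Sigmat I
      = Sigmat I - 1 := by
    rw [Matrix.smul_mul]
    ext v w n
    rw [Matrix.smul_apply, Matrix.sub_apply, smul_eq_mul, map_sub]
    cases n with
    | zero =>
        rw [PowerSeries.coeff_zero_eq_constantCoeff]
        simp only [map_mul, PowerSeries.constantCoeff_X, zero_mul]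
        rw [← PowerSeries.coeff_zero_eq_constantCoeff]
        simp [Sigmat, Matrix.one_apply, PowerSeries.coeff_one, Matrix.one_apply]
    | succ n =>
        rw [PowerSeries.coeff_succ_X_mul]
        simp only [Matrix.mul_apply, Matrix.map_apply, Sigmat]
        rw [map_sum]
        simp only [PowerSeries.coeff_C_mul, PowerSeries.coeff_mk]
        have : ((TM I)^(n+1)) v w = ∑ k, TM I v k * ((TM I)^n) k w := by
          rw [pow_succ']
          rfl
        rw [this]
        rw [Matrix.one_apply]; split_ifs <;> simp [PowerSeries.coeff_one]
  rw [Matrix.sub_mul, Matrix.one_mul, key]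
  abel

lemma mapN :
    (Polynomial.coeToPowerSeries.ringHom (R := ℤ)).mapMatrix (Npoly I) =
      ((1 : Matrix (V I) (V I) (PowerSeries ℤ)) -
        (PowerSeries.X : PowerSeries ℤ) • (TM I).map (PowerSeries.C (R := ℤ))) := by
  ext v w n
  rw [RingHom.mapMatrix_apply, Matrix.map_apply, Npoly, Matrix.sub_apply, Matrix.smul_apply,
    smul_eq_mul, Polynomial.coeToPowerSeries.ringHom_apply, Polynomial.coe_sub,
    Polynomial.coe_mul, Polynomial.coe_X, Matrix.map_apply, Polynomial.coe_C,
    Matrix.sub_apply, Matrix.smul_apply, smul_eq_mul, Matrix.map_apply]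
  congr 2
  rw [Matrix.one_apply, Matrix.one_apply]
  split_ifs <;> simp

lemma Sigma_mul_det (v w : V I) :
    Sigmat I v w * ((Npoly I).det : PowerSeries ℤ) =
      ((Npoly I).adjugate v w : PowerSeries ℤ) := by
  have h1 : ((Polynomial.coeToPowerSeries.ringHom (R := ℤ)).mapMatrix
        ((Npoly I).adjugate) * ((Polynomial.coeToPowerSeries.ringHom (R := ℤ)).mapMatrix
        (Npoly I) * Sigmat I)) = (Polynomial.coeToPowerSeries.ringHom (R := ℤ)).mapMatrix
        ((Npoly I).adjugate) := by
    rw [mapN, N_mul_Sigma, mul_one]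
  rw [← mul_assoc, ← map_mul, Matrix.adjugate_mul] at h1
  have h2 : ((Polynomial.coeToPowerSeries.ringHom (R := ℤ)).mapMatrix
      ((Npoly I).det • (1 : Matrix (V I) (V I) (Polynomial ℤ))))
      = (Polynomial.coeToPowerSeries.ringHom ((Npoly I).det)) •
        (1 : Matrix (V I) (V I) (PowerSeries ℤ)) := by
    ext a b
    simp only [RingHom.mapMatrix_apply, Matrix.map_apply, Matrix.smul_apply,
      Matrix.one_apply, smul_eq_mul]
    split_ifs <;> simp
  rw [h2, Matrix.smul_mul, Matrix.one_mul] at h1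
  have := congrFun (congrFun (congrArg (fun Mt => Mt) h1) v) w
  have h3 := congrArg (fun Mt : Matrix (V I) (V I) (PowerSeries ℤ) => Mt v w) h1
  simp only [Matrix.smul_apply, smul_eq_mul, RingHom.mapMatrix_apply, Matrix.map_apply,
    Polynomial.coeToPowerSeries.ringHom_apply] at h3
  rw [mul_comm] at h3
  exact h3

end Series

/-- Corollary 2.9(4): the Hilbert series of E(A) in the cohomological grading
    (dim Ext^0 = 1, dim Ext^{i+1} = number of anchored walks of length i)
    is a rational function. -/
theorem stmt12 {σ : Type} [Finite σ] (I : MonIdeal σ) :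
    ∃ P Q : Polynomial ℤ, Q ≠ 0 ∧
      PowerSeries.mk (fun i => match i with
        | 0 => (1 : ℤ)
        | (j+1) => (growth I j : ℤ)) * (Q : PowerSeries ℤ) = (P : PowerSeries ℤ) := by
  classical
  set Q : Polynomial ℤ := (Npoly I).det with hQ
  set P1 : Polynomial ℤ :=
    ∑ v : V I, ∑ w : V I, Polynomial.C (uvec I v) * (Npoly I).adjugate v w with hP1
  refine ⟨Q + Polynomial.X * P1, Q, ?_, ?_⟩
  · intro h0
    have h1 : (Polynomial.evalRingHom (0 : ℤ)) Q = 1 := by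
      rw [hQ, RingHom.map_det]
      have hN : (Polynomial.evalRingHom (0 : ℤ)).mapMatrix (Npoly I) = 1 := by
        ext v w
        rw [RingHom.mapMatrix_apply, Matrix.map_apply, Npoly, Matrix.sub_apply,
          Matrix.smul_apply, smul_eq_mul]
        rw [Matrix.one_apply, Matrix.one_apply]
        split_ifs <;> simp
      rw [hN, Matrix.det_one]
    rw [h0] at h1
    simp at h1
  · have hg : PowerSeries.mk (fun j => (growth I j : ℤ))
        = ∑ v : V I, ∑ w : V I, PowerSeries.C (R := ℤ) (uvec I v) * Sigmat I v w := by
      refine PowerSeries.ext fun n => ?_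
      rw [PowerSeries.coeff_mk, growth_eq I n, map_sum]
      simp only [map_sum, PowerSeries.coeff_C_mul, Sigmat, PowerSeries.coeff_mk]
      rw [Finset.sum_comm]
      refine Finset.sum_congr rfl fun w _ => ?_
      simp [Matrix.vecMul, dotProduct, uvec]
    have hcoeP1 : ((P1 : Polynomial ℤ) : PowerSeries ℤ) =
        ∑ v : V I, ∑ w : V I,
          PowerSeries.C (R := ℤ) (uvec I v) * ((Npoly I).adjugate v w : PowerSeries ℤ) := by
      rw [← Polynomial.coeToPowerSeries.ringHom_apply, hP1, map_sum]
      refine Finset.sum_congr rfl fun v _ => ?_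
      rw [map_sum]
      refine Finset.sum_congr rfl fun w _ => ?_
      rw [map_mul, Polynomial.coeToPowerSeries.ringHom_apply,
        Polynomial.coeToPowerSeries.ringHom_apply, Polynomial.coe_C]
    have hgQ : PowerSeries.mk (fun j => (growth I j : ℤ)) * (Q : PowerSeries ℤ)
        = (P1 : PowerSeries ℤ) := by
      rw [hg, hcoeP1, Finset.sum_mul]
      refine Finset.sum_congr rfl fun v _ => ?_
      rw [Finset.sum_mul]
      refine Finset.sum_congr rfl fun w _ => ?_
      rw [mul_assoc, Sigma_mul_det]
    have hfg : PowerSeries.mk (fun i => match i with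
        | 0 => (1 : ℤ)
        | (j+1) => (growth I j : ℤ))
        = 1 + PowerSeries.X * PowerSeries.mk (fun j => (growth I j : ℤ)) := by
      refine PowerSeries.ext fun n => ?_
      cases n with
      | zero => simp
      | succ n => simp [PowerSeries.coeff_succ_X_mul, PowerSeries.coeff_one]
    rw [hfg, add_mul, one_mul, mul_assoc, hgQ, Polynomial.coe_add, Polynomial.coe_mul,
      Polynomial.coe_X]
end CPS
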